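/- The Bar-Natan Frobenius algebra satisfies the Frobenius compatibility law: as R-linear maps A ⊗_R A → A ⊗_R A one has Δ ∘ m = (m ⊗ id_A) ∘ (id_A ⊗ Δ) = (id_A ⊗ m) ∘ (Δ ⊗ id_A), where the middle and right compositions use the canonical associator isomorphisms of triple tensor products. -/

import Mathlib

open Polynomial TensorProduct

noncomputable section

set_option synthInstance.maxHeartbeats 1000000
set_option maxHeartbeats 2000000
set_option linter.unnecessarySeqFocus false

/-- `R = 𝔽₂[Q]/(Q²)`, the dual numbers over the field with two elements. -/
abbrev R2 : Type := DualNumber (ZMod 2)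

/-- The element `Q ∈ R` with `Q² = 0`. -/
noncomputable def Qe : R2 := DualNumber.eps

/-- The polynomial `X² - Q·X` over `R`. -/
noncomputable def BNpoly : Polynomial R2 := X ^ 2 - C Qe * X

/-- The Bar-Natan Frobenius algebra `A = R[X]/(X² - Q·X)`. -/
abbrev BN : Type := AdjoinRoot BNpoly

/-- The class of `X` in `A`. -/
noncomputable def Xa : BN := AdjoinRoot.root BNpoly

lemma hQ2 : Qe * Qe = 0 := DualNumber.eps_mul_eps

lemma hQ2' : Qe ^ 2 = 0 := by rw [sq]; exact hQ2

lemma h2R : (2 : R2) = 0 := by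
  have : (2:R2) = ((2:ℕ):R2) := by norm_cast
  rw [this]
  refine TrivSqZeroExt.ext ?_ ?_
  · rw [TrivSqZeroExt.fst_natCast]; decide
  · rw [TrivSqZeroExt.snd_natCast]; rfl

lemma hsmul (r : R2) (x : BN) : r • x = AdjoinRoot.of BNpoly r * x :=
  Algebra.smul_def r x

lemma hX2 : Xa * Xa = Qe • Xa := by
  have h : eval₂ (AdjoinRoot.of BNpoly) Xa (X ^ 2 - C Qe * X) = 0 := AdjoinRoot.eval₂_root BNpoly
  simp [eval₂_sub, eval₂_mul, eval₂_pow, sq, sub_eq_zero] at h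
  rw [hsmul]
  exact h

lemma BNpoly_monic : BNpoly.Monic := by
  unfold BNpoly
  apply Polynomial.monic_X_pow_sub ?_
  exact lt_of_le_of_lt (Polynomial.degree_C_mul_X_le Qe) (by decide)

lemma BNpoly_deg : BNpoly.degree = 2 := by
  unfold BNpoly
  compute_degree!

lemma hrep (y : BN) : ∃ c d : R2, y = c • (1:BN) + d • Xa := by
  obtain ⟨p, rfl⟩ := AdjoinRoot.mk_surjective y
  have h1 : AdjoinRoot.mk BNpoly p = AdjoinRoot.mk BNpoly (p %ₘ BNpoly) := by
    rw [Polynomial.modByMonic_eq_sub_mul_div p BNpoly]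
    simp [map_sub, map_mul]
  have hdeg : (p %ₘ BNpoly).degree ≤ 1 := by
    have h3 := Polynomial.degree_modByMonic_lt p BNpoly_monic
    rw [BNpoly_deg] at h3
    exact Order.le_of_lt_succ (by exact_mod_cast h3)
  have h4 := Polynomial.eq_X_add_C_of_degree_le_one hdeg
  refine ⟨(p %ₘ BNpoly).coeff 0, (p %ₘ BNpoly).coeff 1, ?_⟩
  rw [h1, h4]
  simp [map_add, map_mul, hsmul, Xa, mul_comm]
  ring

/-- the Frobenius compatibility law
`Δ ∘ m = (m ⊗ id) ∘ (id ⊗ Δ) = (id ⊗ m) ∘ (Δ ⊗ id)` for the Bar-Natan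
Frobenius algebra, where `m = LinearMap.mul' R2 BN` is the multiplication map
and the associator isomorphisms are used to identify triple tensor products. -/
theorem barNatan_frobenius_law
    (Δ : BN →ₗ[R2] BN ⊗[R2] BN)
    (hΔ1 : Δ 1 = (1 : BN) ⊗ₜ[R2] Xa + Xa ⊗ₜ[R2] (1 : BN) + Qe • ((1 : BN) ⊗ₜ[R2] (1 : BN)))
    (hΔX : Δ Xa = Xa ⊗ₜ[R2] Xa) (z : BN ⊗[R2] BN) :
    Δ (LinearMap.mul' R2 BN z) =
      TensorProduct.map (LinearMap.mul' R2 BN) LinearMap.id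
        ((TensorProduct.assoc R2 BN BN BN).symm (TensorProduct.map LinearMap.id Δ z)) ∧
    Δ (LinearMap.mul' R2 BN z) =
      TensorProduct.map LinearMap.id (LinearMap.mul' R2 BN)
        (TensorProduct.assoc R2 BN BN BN (TensorProduct.map Δ LinearMap.id z)) := by
  have key1 : ∀ a b : BN, Δ (LinearMap.mul' R2 BN (a ⊗ₜ[R2] b)) =
      TensorProduct.map (LinearMap.mul' R2 BN) LinearMap.id
        ((TensorProduct.assoc R2 BN BN BN).symm
          (TensorProduct.map LinearMap.id Δ (a ⊗ₜ[R2] b))) := by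
    intro a b
    obtain ⟨c, d, rfl⟩ := hrep a
    obtain ⟨e, f, rfl⟩ := hrep b
    simp only [LinearMap.mul'_apply, map_tmul, LinearMap.id_coe, id_eq, add_mul, mul_add,
      smul_mul_smul_comm, smul_mul_assoc, mul_smul_comm, one_mul, mul_one, hX2,
      map_add, map_smul, hΔ1, hΔX, tmul_add, add_tmul, smul_tmul, tmul_smul,
      assoc_symm_tmul, assoc_tmul, smul_smul, hQ2, zero_smul, smul_zero]
    match_scalars <;> ring_nf <;> simp [hQ2, hQ2', h2R]
  have key2 : ∀ a b : BN, Δ (LinearMap.mul' R2 BN (a ⊗ₜ[R2] b)) =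
      TensorProduct.map LinearMap.id (LinearMap.mul' R2 BN)
        ((TensorProduct.assoc R2 BN BN BN)
          (TensorProduct.map Δ LinearMap.id (a ⊗ₜ[R2] b))) := by
    intro a b
    obtain ⟨c, d, rfl⟩ := hrep a
    obtain ⟨e, f, rfl⟩ := hrep b
    simp only [LinearMap.mul'_apply, map_tmul, LinearMap.id_coe, id_eq, add_mul, mul_add,
      smul_mul_smul_comm, smul_mul_assoc, mul_smul_comm, one_mul, mul_one, hX2,
      map_add, map_smul, hΔ1, hΔX, tmul_add, add_tmul, smul_tmul, tmul_smul,
      assoc_symm_tmul, assoc_tmul, smul_smul, hQ2, zero_smul, smul_zero]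
    match_scalars <;> ring_nf <;> simp [hQ2, hQ2', h2R]
  constructor
  · induction z using TensorProduct.induction_on with
    | zero => simp
    | tmul a b => exact key1 a b
    | add x y hx hy => simp only [map_add, hx, hy]
  · induction z using TensorProduct.induction_on with
    | zero => simp
    | tmul a b => exact key2 a b
    | add x y hx hy => simp only [map_add, hx, hy]
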